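/- arXiv:2002.02684 — 4 statements merged into one kernel-verified Lean document; each statement's English description precedes it below -/
import Mathlib

section
/- Assume each Cₙ is Hermitian positive semidefinite and σ² > 0 (so that C_y is symmetric positive definite). Then the matrix Γ = Γ₀ − (1/4) Γ₀ Dᴴ C_y⁻¹ D Γ₀ is Hermitian positive semidefinite. (Proof idea: the Hermitian block matrix with blocks [[Γ₀, (1/2)Γ₀Dᴴ],[(1/2)DΓ₀, C_y]] is positive semidefinite, and Γ is its Schur complement with respect to the invertible block C_y.) -/
open Matrix
open scoped ComplexOrder

/-- Horizontal concatenation of the matrices `Ψ n`, `n = 1,…,N`. -/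
def concatD {N M : ℕ} (Ψ : Fin N → Matrix (Fin N) (Fin M) ℂ) :
    Matrix (Fin N) (Fin N × Fin M) ℂ :=
  Matrix.of fun k p => Ψ p.1 k p.2

/-- Block-diagonal matrix with `M×M` diagonal blocks `C 1,…,C N`. -/
def blockDiagC {N M : ℕ} (C : Fin N → Matrix (Fin M) (Fin M) ℂ) :
    Matrix (Fin N × Fin M) (Fin N × Fin M) ℂ :=
  Matrix.of fun p q => if p.1 = q.1 then C p.1 p.2 q.2 else 0

lemma smul_psd {n : Type*} [Fintype n] {A : Matrix n n ℂ} (hA : A.PosSemidef)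
    {c : ℂ} (hc : 0 ≤ c) : (c • A).PosSemidef := by
  have him : star c = c := by
    rw [Complex.star_def, Complex.conj_eq_iff_im]
    exact ((Complex.le_def.mp hc).2).symm
  refine posSemidef_iff_dotProduct_mulVec.mpr ⟨?_, ?_⟩
  · unfold Matrix.IsHermitian
    rw [conjTranspose_smul, hA.1, him]
  · intro x
    rw [smul_mulVec, dotProduct_smul, smul_eq_mul]
    exact mul_nonneg hc (hA.dotProduct_mulVec_nonneg x)

lemma blockDiagC_psd {N M : ℕ} (C : Fin N → Matrix (Fin M) (Fin M) ℂ)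
    (hC : ∀ n, (C n).PosSemidef) : (blockDiagC C).PosSemidef := by
  refine posSemidef_iff_dotProduct_mulVec.mpr ⟨?_, ?_⟩
  · ext ⟨n, i⟩ ⟨m, j⟩
    simp only [blockDiagC, conjTranspose_apply, of_apply]
    rcases eq_or_ne n m with h | h
    · subst h
      simp only [if_pos rfl]
      exact congrFun (congrFun (hC n).1 i) j
    · simp [h, Ne.symm h]
  · intro x
    have key : star x ⬝ᵥ (blockDiagC C) *ᵥ x
        = ∑ n, star (fun i => x (n, i)) ⬝ᵥ (C n *ᵥ fun i => x (n, i)) := by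
      simp only [dotProduct, mulVec, blockDiagC, of_apply, Pi.star_apply,
        Fintype.sum_prod_type, ite_mul, zero_mul]
      refine Finset.sum_congr rfl fun n _ => Finset.sum_congr rfl fun i _ => ?_
      congr 1
      rw [Finset.sum_comm]
      simp [Finset.sum_ite_eq]
    rw [key]
    exact Finset.sum_nonneg fun n _ => (hC n).dotProduct_mulVec_nonneg _

/-- If each `Cₙ` is Hermitian positive semidefinite and `σ² > 0`, the posterior covariance
`Γ = Γ₀ − (1/4) Γ₀ Dᴴ C_y⁻¹ D Γ₀` is Hermitian positive semidefinite. -/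
theorem stmt4 {N M : ℕ} (Ψ : Fin N → Matrix (Fin N) (Fin M) ℂ)
    (C : Fin N → Matrix (Fin M) (Fin M) ℂ) (hC : ∀ n, (C n).PosSemidef)
    (σ2 : ℝ) (hσ2 : 0 < σ2)
    (Cy : Matrix (Fin N) (Fin N) ℝ)
    (hCy : Cy = σ2 • (1 : Matrix (Fin N) (Fin N) ℝ) +
        (1 / 2 : ℝ) • (concatD Ψ * blockDiagC C * (concatD Ψ)ᴴ).map Complex.re)
    (Γ : Matrix (Fin N × Fin M) (Fin N × Fin M) ℂ)
    (hΓ : Γ = blockDiagC C - (1 / 4 : ℂ) •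
        (blockDiagC C * (concatD Ψ)ᴴ * (Cy⁻¹.map Complex.ofReal) * concatD Ψ * blockDiagC C)) :
    Γ.PosSemidef := by
  set D := concatD Ψ with hD
  set G := blockDiagC C with hG
  have hGpsd : G.PosSemidef := blockDiagC_psd C hC
  set X := D * G * Dᴴ with hX
  have hXpsd : X.PosSemidef := hGpsd.mul_mul_conjTranspose_same D
  set K := Cy.map (Complex.ofReal) with hK
  -- key entrywise identity
  have hKeq : K = (σ2 : ℂ) • (1 : Matrix (Fin N) (Fin N) ℂ)
      + (1 / 4 : ℂ) • (X + Xᵀ) := by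
    ext k l
    have hherm : Xᵀ k l = star (X k l) := (hXpsd.1.apply l k).symm
    have hre : X k l + star (X k l) = 2 * (Complex.ofReal (Complex.re (X k l))) := by
      rw [Complex.star_def, Complex.add_conj]; push_cast; ring
    simp only [hK, hCy, Matrix.map_apply, Matrix.add_apply, Matrix.smul_apply,
      Matrix.one_apply, Matrix.map_apply, smul_eq_mul]
    rw [hherm]
    rw [hre]
    split_ifs with h <;> (push_cast; ring)
  -- positive definiteness of K
  have hone : ((σ2 : ℂ) • (1 : Matrix (Fin N) (Fin N) ℂ)).PosDef := by
    refine posDef_iff_dotProduct_mulVec.mpr ⟨?_, ?_⟩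
    · unfold Matrix.IsHermitian
      rw [conjTranspose_smul, conjTranspose_one]
      congr 1
      exact Complex.conj_ofReal σ2
    · intro x hx
      rw [smul_mulVec, dotProduct_smul, one_mulVec, smul_eq_mul]
      exact mul_pos (Complex.zero_lt_real.mpr hσ2) (dotProduct_star_self_pos_iff.mpr hx)
  have hXsum : ((1 / 4 : ℂ) • (X + Xᵀ)).PosSemidef :=
    smul_psd (hXpsd.add hXpsd.transpose) (by rw [Complex.le_def]; norm_num)
  have hKpd : K.PosDef := by
    rw [hKeq]
    exact hone.add_posSemidef hXsum
  haveI : Invertible K := hKpd.isUnit.invertible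
  -- the inverse commutes with the real-to-complex entrywise map
  have hdetK : K.det = (Cy.det : ℂ) := by
    rw [hK]
    exact (RingHom.map_det Complex.ofRealHom Cy).symm
  have hdet : IsUnit Cy.det := by
    have h0 := hKpd.det_pos
    rw [hdetK] at h0
    have h1 : (0 : ℝ) < Cy.det := Complex.zero_lt_real.mp h0
    exact h1.ne'.isUnit
  have hinv : K⁻¹ = Cy⁻¹.map Complex.ofReal := by
    apply inv_eq_right_inv
    have h1 : Cy * Cy⁻¹ = 1 := mul_nonsing_inv _ hdet
    have h2 := congrArg (Matrix.map · (Complex.ofRealHom : ℝ →+* ℂ)) h1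
    simp only [Matrix.map_mul, Matrix.map_one (Complex.ofRealHom : ℝ →+* ℂ)
      (map_zero _) (map_one _)] at h2
    exact h2
  -- the PSD block matrix
  set B := (1 / 2 : ℂ) • (G * Dᴴ) with hB
  have hhalf : star (1 / 2 : ℂ) = 1 / 2 := by simp
  have hBH : Bᴴ = (1 / 2 : ℂ) • (D * G) := by
    rw [hB, conjTranspose_smul, conjTranspose_mul, conjTranspose_conjTranspose, hGpsd.1, hhalf]
  set R := (σ2 : ℂ) • (1 : Matrix (Fin N) (Fin N) ℂ) + (1 / 4 : ℂ) • Xᵀ with hR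
  have hRpsd : R.PosSemidef :=
    hone.posSemidef.add (smul_psd hXpsd.transpose (by rw [Complex.le_def]; norm_num))
  have hKsplit : K = (1 / 4 : ℂ) • X + R := by
    rw [hKeq, hR, smul_add]
    abel
  have e1 : (fromRows (1 : Matrix (Fin N × Fin M) (Fin N × Fin M) ℂ) ((1 / 2 : ℂ) • D)) * G *
      (fromRows (1 : Matrix (Fin N × Fin M) (Fin N × Fin M) ℂ) ((1 / 2 : ℂ) • D))ᴴ
      = fromBlocks G B Bᴴ ((1 / 4 : ℂ) • X) := by
    rw [conjTranspose_fromRows_eq_fromCols_conjTranspose, fromRows_mul,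
      fromRows_mul_fromCols, hB, hBH, hX]
    simp only [conjTranspose_smul, conjTranspose_one, hhalf, Matrix.smul_mul, Matrix.mul_smul,
      Matrix.one_mul, Matrix.mul_one, smul_smul]
    norm_num [Matrix.mul_assoc]
  have t1 : (fromBlocks G B Bᴴ ((1 / 4 : ℂ) • X)).PosSemidef := by
    rw [← e1]
    exact hGpsd.mul_mul_conjTranspose_same _
  have e2 : (fromRows (0 : Matrix (Fin N × Fin M) (Fin N) ℂ) (1 : Matrix (Fin N) (Fin N) ℂ)) * R *
      (fromRows (0 : Matrix (Fin N × Fin M) (Fin N) ℂ) (1 : Matrix (Fin N) (Fin N) ℂ))ᴴ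
      = fromBlocks 0 0 0 R := by
    rw [conjTranspose_fromRows_eq_fromCols_conjTranspose, fromRows_mul,
      fromRows_mul_fromCols]
    simp
  have t2 : (fromBlocks (0 : Matrix (Fin N × Fin M) (Fin N × Fin M) ℂ) 0 0 R).PosSemidef := by
    rw [← e2]
    exact hRpsd.mul_mul_conjTranspose_same _
  have hblocks : (fromBlocks G B Bᴴ K).PosSemidef := by
    have hsum : fromBlocks G B Bᴴ K
        = fromBlocks G B Bᴴ ((1 / 4 : ℂ) • X) + fromBlocks 0 0 0 R := by
      rw [fromBlocks_add, add_zero, add_zero, add_zero, ← hKsplit]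
    rw [hsum]
    exact t1.add t2
  have hschur := (PosDef.fromBlocks₂₂ G B hKpd).mp hblocks
  have hfinal : G - B * K⁻¹ * Bᴴ = Γ := by
    rw [hΓ, hB, hBH, hinv]
    simp only [Matrix.smul_mul, Matrix.mul_smul, smul_smul]
    norm_num [Matrix.mul_assoc]
  rwa [hfinal] at hschur
end

section
/- Assume each Cₙ is Hermitian positive semidefinite and σ² > 0. For y ∈ ℝ^N, define for each n the vector w̃ₙ = (1/2) Cₙ Ψₙᴴ C_y⁻¹ y ∈ ℂ^M. Then the reconstruction ỹ₀ = Re(Σ_{n=1}^{N} Ψₙ w̃ₙ) satisfies ỹ₀ = y − σ² C_y⁻¹ y = (I − σ² C_y⁻¹) y; that is, the synthesis from the posterior-mean coefficients acts on y as the Wiener-type filter I − σ²C_y⁻¹. -/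
open Matrix
open scoped ComplexOrder

lemma concat_eq {N M : ℕ} (Ψ : Fin N → Matrix (Fin N) (Fin M) ℂ)
    (C : Fin N → Matrix (Fin M) (Fin M) ℂ) :
    concatD Ψ * blockDiagC C * (concatD Ψ)ᴴ = ∑ n, Ψ n * C n * (Ψ n)ᴴ := by
  ext k l
  simp only [mul_apply, concatD, blockDiagC, conjTranspose_apply, of_apply,
    Matrix.sum_apply, Fintype.sum_prod_type, mul_ite, mul_zero, ite_mul, zero_mul,
    Finset.sum_ite_eq', Finset.mem_univ, if_true, Finset.sum_ite_eq, Finset.mul_sum,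
    Finset.sum_mul]
  refine Finset.sum_congr rfl fun n _ => Finset.sum_congr rfl fun m _ => ?_
  rw [Finset.sum_comm]
  simp [Finset.sum_ite_eq']

lemma re_psd {n : ℕ} {S : Matrix (Fin n) (Fin n) ℂ} (hS : S.PosSemidef) :
    (S.map Complex.re).PosSemidef := by
  rw [posSemidef_iff_dotProduct_mulVec]
  constructor
  · ext i j
    have h := congrFun (congrFun hS.1 i) j
    simp only [conjTranspose_apply, map_apply] at h ⊢
    rw [← h]
    simp [Complex.conj_re]
  · intro x
    have h := (posSemidef_iff_dotProduct_mulVec.mp hS).2 (fun i => (x i : ℂ))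
    have hre : 0 ≤ ((star fun i => (x i:ℂ)) ⬝ᵥ (S *ᵥ fun i => (x i:ℂ))).re := by
      simpa using (Complex.le_def.mp h).1
    have key : (star x) ⬝ᵥ ((S.map Complex.re) *ᵥ x)
        = ((star fun i => (x i:ℂ)) ⬝ᵥ (S *ᵥ fun i => (x i:ℂ))).re := by
      simp [dotProduct, mulVec, Complex.re_sum, Complex.mul_re, Finset.mul_sum]
    rw [key]; exact hre

/-- The synthesis `ỹ₀ = Re(∑ₙ Ψₙ w̃ₙ)` from the posterior-mean coefficients
`w̃ₙ = (1/2) Cₙ Ψₙᴴ C_y⁻¹ y` acts on `y` as the Wiener-type filter `I − σ²C_y⁻¹`: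
`ỹ₀ = y − σ² C_y⁻¹ y = (I − σ² C_y⁻¹) y`. -/
theorem stmt5 {N M : ℕ} (Ψ : Fin N → Matrix (Fin N) (Fin M) ℂ)
    (C : Fin N → Matrix (Fin M) (Fin M) ℂ) (hC : ∀ n, (C n).PosSemidef)
    (σ2 : ℝ) (hσ2 : 0 < σ2)
    (Cy : Matrix (Fin N) (Fin N) ℝ)
    (hCy : Cy = σ2 • (1 : Matrix (Fin N) (Fin N) ℝ) +
        (1 / 2 : ℝ) • (concatD Ψ * blockDiagC C * (concatD Ψ)ᴴ).map Complex.re)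
    (y : Fin N → ℝ)
    (w : Fin N → Fin M → ℂ)
    (hw : ∀ n, w n = (1 / 2 : ℂ) •
        (C n * (Ψ n)ᴴ * Cy⁻¹.map Complex.ofReal) *ᵥ (fun k => (y k : ℂ)))
    (y₀ : Fin N → ℝ)
    (hy₀ : y₀ = fun k => ((∑ n, Ψ n *ᵥ w n) k).re) :
    y₀ = y - σ2 • (Cy⁻¹ *ᵥ y) ∧
    y₀ = ((1 : Matrix (Fin N) (Fin N) ℝ) - σ2 • Cy⁻¹) *ᵥ y := by
  set S : Matrix (Fin N) (Fin N) ℂ := ∑ n, Ψ n * C n * (Ψ n)ᴴ with hSdef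
  have hDS : concatD Ψ * blockDiagC C * (concatD Ψ)ᴴ = S := concat_eq Ψ C
  have hSpsd : S.PosSemidef :=
    Finset.sum_induction _ _ (fun a b ha hb => ha.add hb) Matrix.PosSemidef.zero
      (fun n _ => (hC n).mul_mul_conjTranspose_same _)
  have hRepsd : (S.map Complex.re).PosSemidef := re_psd hSpsd
  have hhalf : ((1/2 : ℝ) • S.map Complex.re).PosSemidef := by
    rw [posSemidef_iff_dotProduct_mulVec]
    constructor
    · show _ = _
      ext i j
      have h := congrFun (congrFun hRepsd.1 i) j
      simp only [conjTranspose_apply, Matrix.smul_apply, smul_eq_mul, star_trivial] at h ⊢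
      rw [h]
    · intro x
      rw [smul_mulVec, dotProduct_smul, smul_eq_mul]
      exact mul_nonneg (by norm_num) ((posSemidef_iff_dotProduct_mulVec.mp hRepsd).2 x)
  have hCyPD : Cy.PosDef := by
    rw [hCy, hDS]
    refine Matrix.PosDef.add_posSemidef ?_ hhalf
    rw [posDef_iff_dotProduct_mulVec]
    constructor
    · show _ = _
      ext i j
      simp [conjTranspose_apply, one_apply, eq_comm]
    · intro x hx
      rw [smul_mulVec, one_mulVec, dotProduct_smul, smul_eq_mul]
      exact mul_pos hσ2 (dotProduct_star_self_pos_iff.mpr hx)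
  have hCyInv : Cy * Cy⁻¹ = 1 := mul_nonsing_inv _ hCyPD.det_pos.ne'.isUnit
  set x : Fin N → ℝ := Cy⁻¹ *ᵥ y with hxdef
  have hcast : (Cy⁻¹.map Complex.ofReal) *ᵥ (fun k => (y k : ℂ)) = fun k => (x k : ℂ) := by
    ext k
    simp [mulVec, dotProduct, hxdef]
  have hsum : (∑ n, Ψ n *ᵥ w n) = (1/2 : ℂ) • (S *ᵥ fun k => (x k : ℂ)) := by
    have hterm : ∀ n, Ψ n *ᵥ w n
        = (1/2 : ℂ) • ((Ψ n * C n * (Ψ n)ᴴ) *ᵥ fun k => (x k : ℂ)) := by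
      intro n
      rw [hw n, Matrix.mulVec_smul]
      congr 1
      rw [Matrix.mulVec_mulVec, ← Matrix.mul_assoc, ← Matrix.mulVec_mulVec, hcast,
        ← Matrix.mul_assoc]
    have hsplit : (∑ n, Ψ n * C n * (Ψ n)ᴴ) *ᵥ (fun k => (x k : ℂ))
        = ∑ n, (Ψ n * C n * (Ψ n)ᴴ) *ᵥ (fun k => (x k : ℂ)) := by
      ext k
      simp only [mulVec, dotProduct, Matrix.sum_apply, Finset.sum_apply, Finset.sum_mul]
      rw [Finset.sum_comm]
    rw [Finset.sum_congr rfl fun n _ => hterm n, ← Finset.smul_sum, hSdef, hsplit]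
  have hy0 : y₀ = ((1/2 : ℝ) • (S.map Complex.re)) *ᵥ x := by
    rw [hy₀, hsum]
    ext k
    simp [mulVec, dotProduct, Complex.re_sum, Complex.mul_re, Finset.mul_sum, mul_assoc]
  have hfilter : (1/2 : ℝ) • (S.map Complex.re) = Cy - σ2 • 1 := by
    rw [hCy, hDS]; abel
  have h1 : y₀ = y - σ2 • (Cy⁻¹ *ᵥ y) := by
    rw [hy0, hfilter, Matrix.sub_mulVec, mulVec_mulVec, hCyInv, one_mulVec,
      smul_mulVec, one_mulVec]
  refine ⟨h1, ?_⟩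
  rw [h1, Matrix.sub_mulVec, one_mulVec, smul_mulVec]
end

section
/- (MAP characterization of the posterior mean.) Assume Γ₀ is Hermitian positive definite and σ² > 0, and let y ∈ ℝ^N. Define the functional J : ℂ^{MN} → ℝ by J(W) = (1/(2σ²))‖y − Re(DW)‖² + Re(Wᴴ Γ₀⁻¹ W), where ‖·‖ is the Euclidean norm on ℝ^N. Then μ = (1/2) Γ₀ Dᴴ C_y⁻¹ y is the unique global minimizer of J: for all W ∈ ℂ^{MN} with W ≠ μ, J(W) > J(μ). -/
open Matrix
open scoped ComplexOrder

private lemma map_re_mulVec {N : ℕ} (A : Matrix (Fin N) (Fin N) ℂ) (x : Fin N → ℝ)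
    (k : Fin N) :
    ((A *ᵥ (fun j => (x j : ℂ))) k).re = ((A.map Complex.re) *ᵥ x) k := by
  simp [Matrix.mulVec, dotProduct, Complex.re_sum]

/-- MAP characterization of the posterior mean: if `Γ₀` is Hermitian positive definite and
`σ² > 0`, then `μ = (1/2) Γ₀ Dᴴ C_y⁻¹ y` is the unique global minimizer of
`J(W) = (1/(2σ²))‖y − Re(DW)‖² + Re(Wᴴ Γ₀⁻¹ W)`. -/
theorem stmt8 {N M : ℕ} (Ψ : Fin N → Matrix (Fin N) (Fin M) ℂ)
    (Γ₀ : Matrix (Fin N × Fin M) (Fin N × Fin M) ℂ) (hΓ₀ : Γ₀.PosDef)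
    (σ2 : ℝ) (hσ2 : 0 < σ2)
    (Cy : Matrix (Fin N) (Fin N) ℝ)
    (hCy : Cy = σ2 • (1 : Matrix (Fin N) (Fin N) ℝ) +
        (1 / 2 : ℝ) • (concatD Ψ * Γ₀ * (concatD Ψ)ᴴ).map Complex.re)
    (y : Fin N → ℝ)
    (J : (Fin N × Fin M → ℂ) → ℝ)
    (hJ : ∀ W, J W = (1 / (2 * σ2)) * (∑ k, (y k - ((concatD Ψ *ᵥ W) k).re) ^ 2) +
        (star W ⬝ᵥ (Γ₀⁻¹ *ᵥ W)).re)
    (μ : Fin N × Fin M → ℂ)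
    (hμ : μ = (1 / 2 : ℂ) • (Γ₀ * (concatD Ψ)ᴴ * Cy⁻¹.map Complex.ofReal) *ᵥ
        (fun k => (y k : ℂ))) :
    ∀ W : Fin N × Fin M → ℂ, W ≠ μ → J μ < J W := by
  intro W hW
  set D := concatD Ψ with hD
  set G := Γ₀⁻¹ with hG
  have hGpd : G.PosDef := hΓ₀.inv
  have hGH : Gᴴ = G := hΓ₀.1.inv
  set S := D * Γ₀ * Dᴴ with hS
  have hSpsd : S.PosSemidef := hΓ₀.posSemidef.mul_mul_conjTranspose_same D
  have hSH : Sᴴ = S := hSpsd.1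
  -- Cy is positive definite, hence invertible
  have hCypd : Cy.PosDef := by
    refine Matrix.posDef_iff_dotProduct_mulVec.mpr ⟨?_, ?_⟩
    · show Cyᴴ = Cy
      ext i j
      have h1 : S i j = star (S j i) := by
        conv_lhs => rw [← hSH]
        rfl
      simp only [hCy, conjTranspose_apply]
      simp [Matrix.add_apply, Matrix.smul_apply, Matrix.one_apply, Matrix.map_apply, h1,
        eq_comm (a := i) (b := j)]
    · intro x hx
      have hx2 : 0 < x ⬝ᵥ x := by
        have := Matrix.dotProduct_star_self_pos_iff (v := x)
        simpa using this.mpr hx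
      have hq : x ⬝ᵥ ((S.map Complex.re) *ᵥ x) =
          (star (fun j => (x j : ℂ)) ⬝ᵥ S *ᵥ (fun j => (x j : ℂ))).re := by
        simp [Matrix.mulVec, dotProduct, Complex.re_sum, Finset.mul_sum]
      have hq0 : 0 ≤ x ⬝ᵥ ((S.map Complex.re) *ᵥ x) := by
        rw [hq]
        exact (Complex.le_def.mp (hSpsd.dotProduct_mulVec_nonneg (fun j => (x j : ℂ)))).1
      have : star x ⬝ᵥ Cy *ᵥ x = σ2 * (x ⬝ᵥ x) + (1/2) * (x ⬝ᵥ ((S.map Complex.re) *ᵥ x)) := by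
        rw [hCy]
        simp [Matrix.add_mulVec, Matrix.smul_mulVec, Matrix.one_mulVec,
          dotProduct_add, dotProduct_smul, smul_eq_mul]
      rw [this]
      positivity
  have hdetCy : IsUnit Cy.det := (Matrix.isUnit_iff_isUnit_det Cy).mp hCypd.isUnit
  have hdetΓ : IsUnit Γ₀.det := (Matrix.isUnit_iff_isUnit_det Γ₀).mp hΓ₀.isUnit
  -- auxiliary vectors
  set u : Fin N → ℝ := Cy⁻¹ *ᵥ y with hu
  set uc : Fin N → ℂ := fun k => (u k : ℂ) with huc
  have hCyu : Cy *ᵥ u = y := by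
    rw [hu, Matrix.mulVec_mulVec, Matrix.mul_nonsing_inv _ hdetCy, Matrix.one_mulVec]
  have hmapval : (Cy⁻¹.map Complex.ofReal) *ᵥ (fun k => (y k : ℂ)) = uc := by
    ext k
    simp [huc, hu, Matrix.mulVec, dotProduct]
  have hμ' : μ = (1/2 : ℂ) • Γ₀ *ᵥ (Dᴴ *ᵥ uc) := by
    rw [hμ, ← Matrix.mulVec_mulVec, ← Matrix.mulVec_mulVec, hmapval]
  have hGμ : G *ᵥ μ = (1/2 : ℂ) • (Dᴴ *ᵥ uc) := by
    rw [hμ', Matrix.mulVec_smul, Matrix.mulVec_mulVec, hG,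
      Matrix.nonsing_inv_mul _ hdetΓ, Matrix.one_mulVec]
  have hDμ : D *ᵥ μ = (1/2 : ℂ) • (S *ᵥ uc) := by
    rw [hμ', Matrix.mulVec_smul, Matrix.mulVec_mulVec, Matrix.mulVec_mulVec, hS,
      Matrix.mul_assoc]
  -- the residual at μ
  have hre : ∀ k, y k - ((D *ᵥ μ) k).re = σ2 * u k := by
    intro k
    have h1 : ((D *ᵥ μ) k).re = (1/2) * ((S.map Complex.re) *ᵥ u) k := by
      rw [hDμ, ← map_re_mulVec S u k]
      simp [Complex.mul_re, huc]
    have h2 : (Cy *ᵥ u) k = σ2 * u k + (1/2) * ((S.map Complex.re) *ᵥ u) k := by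
      rw [hCy]
      simp [Matrix.add_mulVec, Matrix.smul_mulVec, Matrix.one_mulVec, smul_eq_mul]
    have h3 : (Cy *ᵥ u) k = y k := by rw [hCyu]
    rw [h1]
    linarith [h2, h3]
  -- set V and basic facts
  set V : Fin N × Fin M → ℂ := W - μ with hV
  have hVne : V ≠ 0 := sub_ne_zero.mpr hW
  have hW' : W = μ + V := by rw [hV]; ring
  have hDW : D *ᵥ W = D *ᵥ μ + D *ᵥ V := by rw [hW', Matrix.mulVec_add]
  -- stationarity / cross-term
  set rc : Fin N → ℂ := fun k => ((σ2 * u k : ℝ) : ℂ) with hrc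
  have hrcsmul : rc = (σ2 : ℂ) • uc := by
    ext k
    simp [hrc, huc]
  have hstat : Dᴴ *ᵥ rc = (2 * (σ2 : ℂ)) • (G *ᵥ μ) := by
    rw [hrcsmul, Matrix.mulVec_smul, hGμ, smul_smul]
    congr 1
    ring
  have hstarrc : star rc = rc := by
    ext k
    simp [hrc]
  have hCT : ∑ k, (σ2 * u k) * ((D *ᵥ V) k).re = 2 * σ2 * (star V ⬝ᵥ (G *ᵥ μ)).re := by
    have e1 : ∑ k, (σ2 * u k) * ((D *ᵥ V) k).re = (rc ⬝ᵥ (D *ᵥ V)).re := by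
      simp [dotProduct, Complex.re_sum, hrc, Complex.re_ofReal_mul]
    have e2 : rc ⬝ᵥ (D *ᵥ V) = star (Dᴴ *ᵥ rc) ⬝ᵥ V := by
      rw [dotProduct_mulVec]
      congr 1
      rw [star_mulVec, conjTranspose_conjTranspose, hstarrc]
    have e3 : star (Dᴴ *ᵥ rc) = (2 * (σ2 : ℂ)) • star (G *ᵥ μ) := by
      rw [hstat, star_smul]
      congr 1
      simp [Complex.star_def]
    have e4 : (star (G *ᵥ μ) ⬝ᵥ V).re = (star V ⬝ᵥ (G *ᵥ μ)).re := by
      rw [star_dotProduct]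
      simp [Complex.star_def]
    rw [e1, e2, e3, smul_dotProduct, smul_eq_mul, ← e4]
    rw [show (2 * (σ2:ℂ)) = ((2 * σ2 : ℝ) : ℂ) from by push_cast; ring,
      Complex.re_ofReal_mul]
  -- hermitian symmetry of cross terms
  have hHS : (star μ ⬝ᵥ (G *ᵥ V)).re = (star V ⬝ᵥ (G *ᵥ μ)).re := by
    have : star V ⬝ᵥ (G *ᵥ μ) = star (star μ ⬝ᵥ (G *ᵥ V)) := by
      rw [star_dotProduct]
      congr 1
      rw [star_mulVec, hGH, ← dotProduct_mulVec]
    rw [this]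
    simp [Complex.star_def]
  -- expansion of the sum of squares
  have hsum : ∑ k, (y k - ((D *ᵥ W) k).re)^2
      = ∑ k, (y k - ((D *ᵥ μ) k).re)^2
        - 2 * ∑ k, (σ2 * u k) * ((D *ᵥ V) k).re
        + ∑ k, ((D *ᵥ V) k).re^2 := by
    have hterm : ∀ k, (y k - ((D *ᵥ W) k).re)^2
        = (y k - ((D *ᵥ μ) k).re)^2 - 2 * ((σ2 * u k) * ((D *ᵥ V) k).re)
          + ((D *ᵥ V) k).re^2 := by
      intro k
      have h1 : ((D *ᵥ W) k).re = ((D *ᵥ μ) k).re + ((D *ᵥ V) k).re := by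
        rw [hDW]; simp
      have h2 := hre k
      rw [h1]
      linear_combination (-2 * ((D *ᵥ V) k).re) * h2
    rw [Finset.sum_congr rfl (fun k _ => hterm k), Finset.sum_add_distrib,
      Finset.sum_sub_distrib, ← Finset.mul_sum]
  -- expansion of the quadratic form
  have hquad : (star W ⬝ᵥ (G *ᵥ W)).re
      = (star μ ⬝ᵥ (G *ᵥ μ)).re + 2 * (star V ⬝ᵥ (G *ᵥ μ)).re
        + (star V ⬝ᵥ (G *ᵥ V)).re := by
    rw [hW', star_add, Matrix.mulVec_add]
    simp only [add_dotProduct, dotProduct_add, Complex.add_re]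
    rw [hHS]
    ring
  -- put everything together
  have hVV : 0 < (star V ⬝ᵥ (G *ᵥ V)).re := (Complex.lt_def.mp (hGpd.dotProduct_mulVec_pos hVne)).1
  have hb2 : 0 ≤ ∑ k, ((D *ᵥ V) k).re^2 := Finset.sum_nonneg (fun k _ => sq_nonneg _)
  have h2σ : (0:ℝ) < 1 / (2 * σ2) := by positivity
  have key : J W - J μ = (1 / (2 * σ2)) * ∑ k, ((D *ᵥ V) k).re^2
      + (star V ⬝ᵥ (G *ᵥ V)).re := by
    rw [hJ W, hJ μ, hsum, hquad, hCT]
    have hne : σ2 ≠ 0 := hσ2.ne'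
    field_simp
    ring
  linarith [key, hVV, mul_nonneg h2σ.le hb2]
end

section
/- (Monotonicity of the likelihood under the EM update, finite latent variable.) Let 𝒲 be a nonempty finite set and Θ a set of parameters. Let p : Θ × 𝒲 → ℝ satisfy p(θ, w) > 0 for all θ ∈ Θ, w ∈ 𝒲. Define the marginal likelihood L(θ) = Σ_{w ∈ 𝒲} p(θ, w) and, for θ, θ' ∈ Θ, the EM functional Q(θ' | θ) = Σ_{w ∈ 𝒲} (p(θ, w)/L(θ)) · log p(θ', w). If θ, θ' ∈ Θ satisfy Q(θ' | θ) ≥ Q(θ | θ), then log L(θ') ≥ log L(θ). -/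
/-- Monotonicity of the likelihood under the EM update (finite latent variable): with
`L(θ) = ∑_w p(θ,w)` and `Q(θ'|θ) = ∑_w (p(θ,w)/L(θ)) log p(θ',w)`, if
`Q(θ'|θ) ≥ Q(θ|θ)` then `log L(θ') ≥ log L(θ)`. -/
theorem stmt16 {W : Type*} [Fintype W] [Nonempty W] {Θ : Type*}
    (p : Θ → W → ℝ) (hp : ∀ θ w, 0 < p θ w)
    (L : Θ → ℝ) (hL : ∀ θ, L θ = ∑ w, p θ w)
    (Q : Θ → Θ → ℝ)
    (hQ : ∀ θ' θ, Q θ' θ = ∑ w, (p θ w / L θ) * Real.log (p θ' w))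
    (θ θ' : Θ) (hEM : Q θ θ ≤ Q θ' θ) :
    Real.log (L θ) ≤ Real.log (L θ') := by
  have hLpos : ∀ t, 0 < L t := fun t => by
    rw [hL]; exact Finset.sum_pos (fun w _ => hp t w) Finset.univ_nonempty
  have hsumq : ∀ t, (∑ w, p t w / L t) = 1 := fun t => by
    rw [← Finset.sum_div, ← hL, div_self (hLpos t).ne']
  -- key termwise inequality
  have hterm : ∀ w : W, (p θ w / L θ) * (Real.log (p θ' w) - Real.log (p θ w)) ≤
      (p θ' w / L θ' - p θ w / L θ) +
        (p θ w / L θ) * (Real.log (L θ') - Real.log (L θ)) := by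
    intro w
    have hq : 0 < p θ w / L θ := div_pos (hp θ w) (hLpos θ)
    have hr : 0 < p θ' w / L θ' := div_pos (hp θ' w) (hLpos θ')
    have hx : 0 < (p θ' w / L θ') / (p θ w / L θ) := div_pos hr hq
    have hlog : Real.log ((p θ' w / L θ') / (p θ w / L θ)) ≤
        (p θ' w / L θ') / (p θ w / L θ) - 1 := Real.log_le_sub_one_of_pos hx
    have hexp : Real.log ((p θ' w / L θ') / (p θ w / L θ)) =
        (Real.log (p θ' w) - Real.log (L θ')) - (Real.log (p θ w) - Real.log (L θ)) := by
      rw [Real.log_div hr.ne' hq.ne', Real.log_div (hp θ' w).ne' (hLpos θ').ne',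
        Real.log_div (hp θ w).ne' (hLpos θ).ne']
    have := mul_le_mul_of_nonneg_left hlog hq.le
    rw [hexp] at this
    have hdiv : (p θ w / L θ) * ((p θ' w / L θ') / (p θ w / L θ) - 1) =
        p θ' w / L θ' - p θ w / L θ := by
      have h1 := (hp θ w).ne'
      have h3 := (hLpos θ).ne'
      have h4 := (hLpos θ').ne'
      field_simp
    nlinarith [this, hdiv]
  have hsum : (∑ w, (p θ w / L θ) * (Real.log (p θ' w) - Real.log (p θ w))) ≤
      ∑ w, ((p θ' w / L θ' - p θ w / L θ) +
        (p θ w / L θ) * (Real.log (L θ') - Real.log (L θ))) :=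
    Finset.sum_le_sum (fun w _ => hterm w)
  rw [Finset.sum_add_distrib, Finset.sum_sub_distrib, hsumq θ, hsumq θ',
    ← Finset.sum_mul, hsumq θ, one_mul] at hsum
  have hQdiff : Q θ' θ - Q θ θ = ∑ w, (p θ w / L θ) * (Real.log (p θ' w) - Real.log (p θ w)) := by
    rw [hQ θ' θ, hQ θ θ, ← Finset.sum_sub_distrib]
    congr 1; ext w; ring
  rw [← hQdiff] at hsum
  linarith
end
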